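/- Let w be a word over a finite alphabet Σ with |Σ| = σ ≥ 2 and alph(w) = Σ, and let k be a natural number with k > ι(w). Then there exists a letter a ∈ Σ such that for every word v ∈ Σ^k with m(w)·a ∈ ScatFact_{ι(w)+1}(v), we have v ∉ ScatFact_k(w). -/

import Mathlib

open List

universe u
variable {α : Type u}

/-- `ScatFact k w` is the set of scattered factors (subsequences) of `w` of length exactly `k`. -/
def ScatFact (k : ℕ) (w : List α) : Set (List α) :=
  {v | v.length = k ∧ v.Sublist w}

/-- `w` is `k`-universal over the alphabet `S`: every word of length `k` over `S`
is a scattered factor of `w`. -/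
def IsKUniversal [DecidableEq α] (S : Finset α) (k : ℕ) (w : List α) : Prop :=
  ∀ v : List α, v.length = k → (∀ x ∈ v, x ∈ S) → v.Sublist w

/-- The universality index of `w` over the alphabet `S`: the largest `k` such that
`w` is `k`-universal over `S`. -/
noncomputable def univIdx [DecidableEq α] (S : Finset α) (w : List α) : ℕ :=
  sSup {k | IsKUniversal S k w}

/-- `IsArchFact S w inners modus rest` says that `w` has the arch factorization
`w = ar_1 ⋯ ar_n · rest` over the alphabet `S`, where the `i`-th arch is
`ar_i = inners[i] ++ [modus[i]]`: each arch contains every letter of `S`,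
the last letter of each arch occurs only once within the arch, and the
alphabet of the rest is a proper subset of `S`. -/
def IsArchFact [DecidableEq α] (S : Finset α) (w : List α)
    (inners : List (List α)) (modus : List α) (rest : List α) : Prop :=
  inners.length = modus.length ∧
  w = (List.zipWith (fun inn m => inn ++ [m]) inners modus).flatten ++ rest ∧
  (∀ p ∈ List.zip inners modus, ∀ x ∈ S, x ∈ p.1 ++ [p.2]) ∧
  (∀ p ∈ List.zip inners modus, p.2 ∉ p.1) ∧
  rest.toFinset ⊂ S

/-- `v` is perfect `k`-universal over `S`: `alph(v) = S`, the universality index of `v`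
over `S` is `k`, and the rest of its arch factorization over `S` is empty. -/
def IsPerfectUniv [DecidableEq α] (S : Finset α) (k : ℕ) (v : List α) : Prop :=
  v.toFinset = S ∧ univIdx S v = k ∧ ∃ inners modus, IsArchFact S v inners modus []

/-- `v` is minimal perfect `k`-universal over `S`. -/
def IsMinPerfectUniv [DecidableEq α] (S : Finset α) (k : ℕ) (v : List α) : Prop :=
  IsPerfectUniv S k v ∧ ∀ v' : List α, IsPerfectUniv S k v' → v.length ≤ v'.length

/-- `nextAlphPos w i s` (positions `1`-indexed): the least position `j` such that
`w[i+1..j]` contains exactly `s` distinct letters, or `none` (representing `-1`)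
if `w[i+1..|w|]` contains fewer than `s` distinct letters. -/
noncomputable def nextAlphPos [DecidableEq α] (w : List α) (i s : ℕ) : Option ℕ :=
  if (w.drop i).toFinset.card < s then none
  else some (sInf {j | ((w.drop i).take (j - i)).toFinset.card = s})

/-- The letter of `w` at (1-indexed) position `j`. -/
def letterAt [Inhabited α] (w : List α) (j : ℕ) : α := w.getD (j - 1) default

/-- The word over `Fin σ` with `ι` arches, whose first arch is `a_1 a_2 ⋯ a_σ`
and each later arch is the reverse of the previous one. -/
def wmin (σ ι : ℕ) : List (Fin σ) :=
  ((List.range ι).map (fun i =>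
    if i % 2 = 0 then List.finRange σ else (List.finRange σ).reverse)).flatten

lemma key_skip {m : α} : ∀ {inn t tail : List α}, m ∉ inn →
    (m :: t).Sublist (inn ++ m :: tail) → t.Sublist tail := by
  intro inn
  induction inn with
  | nil => intro t tail _ h; exact List.cons_sublist_cons.mp h
  | cons b inn' ih =>
    intro t tail hm h
    simp only [List.mem_cons, not_or] at hm
    cases h with
    | cons _ h' => exact ih hm.2 h'
    | cons_cons _ h' => exact absurd rfl hm.1

lemma notSub [DecidableEq α] : ∀ (modus : List α) (inners : List (List α)),
    inners.length = modus.length → (∀ p ∈ List.zip inners modus, p.2 ∉ p.1) →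
    ∀ a rest, a ∉ rest →
    ¬ (modus ++ [a]).Sublist
      ((List.zipWith (fun inn m => inn ++ [m]) inners modus).flatten ++ rest) := by
  intro modus
  induction modus with
  | nil =>
    intro inners hlen _ a rest ha h
    simp only [List.length_nil, List.length_eq_zero_iff] at hlen
    subst hlen
    simp at h
    exact ha h
  | cons m ms ih =>
    intro inners hlen hnotin a rest ha h
    cases inners with
    | nil => simp at hlen
    | cons inn inns =>
      simp only [List.zipWith_cons_cons, List.flatten_cons, List.cons_append] at h
      rw [List.append_assoc, List.append_assoc] at h
      have hm : m ∉ inn := hnotin (inn, m) (by simp)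
      have h2 := key_skip hm (by simpa using h)
      exact ih inns (by simpa using hlen) (fun p hp => hnotin p (List.mem_cons_of_mem _ hp))
        a rest ha h2

theorem stmt0 {α : Type u} [Fintype α] [DecidableEq α]
    (hsigma : 2 ≤ Fintype.card α) (w : List α) (halph : ∀ a : α, a ∈ w)
    (k : ℕ) (hk : univIdx Finset.univ w < k)
    (inners : List (List α)) (modus : List α) (rest : List α)
    (hfact : IsArchFact Finset.univ w inners modus rest) :
    ∃ a : α, ∀ v : List α, v.length = k →
      (modus ++ [a]) ∈ ScatFact (univIdx Finset.univ w + 1) v →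
      v ∉ ScatFact k w := by
  obtain ⟨hlen, hw, _, hnotin, hrest⟩ := hfact
  obtain ⟨a, -, ha⟩ := Finset.exists_of_ssubset hrest
  rw [List.mem_toFinset] at ha
  refine ⟨a, fun v _ hsf hv => ?_⟩
  have h1 : (modus ++ [a]).Sublist v := hsf.2
  have h2 : v.Sublist w := hv.2
  have := (h1.trans h2)
  rw [hw] at this
  exact notSub modus inners hlen hnotin a rest ha this
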